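/- arXiv:math/0507172 — 2 statements merged into one kernel-verified Lean document; each statement's English description precedes it below -/
import Mathlib

section
/- For every z ∈ ℂ ∖ ℝ+ the matrices Γ(z)⁻¹ − z A Γ̃(z) Aᵀ and Γ̃(z)⁻¹ − z Aᵀ Γ(z) A are invertible, and the matrix-valued functions Υ(z) = (Γ(z)⁻¹ − z A Γ̃(z) Aᵀ)⁻¹ and Υ̃(z) = (Γ̃(z)⁻¹ − z Aᵀ Γ(z) A)⁻¹ are analytic (entrywise holomorphic) on ℂ ∖ ℝ+. -/
open MeasureTheory Matrix Complex Filter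
open scoped Topology ComplexOrder

noncomputable section

/-- The set `ℂ ∖ ℝ₊`. -/
def offRplus : Set ℂ := {z : ℂ | ¬ (z.im = 0 ∧ 0 ≤ z.re)}

/-- `f` is the Stieltjes transform of a probability measure carried by `ℝ₊`. -/
def IsStieltjesPM (f : ℂ → ℂ) : Prop :=
  ∃ μ : Measure ℝ, IsProbabilityMeasure μ ∧ μ (Set.Iio 0) = 0 ∧
    ∀ z ∈ offRplus, f z = ∫ t, ((t : ℂ) - z)⁻¹ ∂μ
def Tmat {N n : ℕ} (A : Matrix (Fin N) (Fin n) ℝ)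
    (ψ : Fin N → ℂ → ℂ) (ψt : Fin n → ℂ → ℂ) (z : ℂ) : Matrix (Fin N) (Fin N) ℂ :=
  ((Matrix.diagonal fun i => ψ i z)⁻¹
    - z • (A.map Complex.ofReal * Matrix.diagonal (fun j => ψt j z) * (A.map Complex.ofReal)ᵀ))⁻¹

def Ttmat {N n : ℕ} (A : Matrix (Fin N) (Fin n) ℝ)
    (ψ : Fin N → ℂ → ℂ) (ψt : Fin n → ℂ → ℂ) (z : ℂ) : Matrix (Fin n) (Fin n) ℂ :=
  ((Matrix.diagonal fun j => ψt j z)⁻¹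
    - z • ((A.map Complex.ofReal)ᵀ * Matrix.diagonal (fun i => ψ i z) * A.map Complex.ofReal))⁻¹

def SolvesSystem {N n : ℕ} (σ : Fin N → Fin n → ℝ) (A : Matrix (Fin N) (Fin n) ℝ)
    (ψ : Fin N → ℂ → ℂ) (ψt : Fin n → ℂ → ℂ) : Prop :=
  (∀ i, IsStieltjesPM (ψ i)) ∧ (∀ j, IsStieltjesPM (ψt j)) ∧
  ∀ z ∈ offRplus,
    (∀ i, ψ i z
      = -(z * (1 + (n : ℂ)⁻¹
          * ((Matrix.diagonal fun j => ((σ i j : ℂ))^2) * Ttmat A ψ ψt z).trace))⁻¹) ∧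
    (∀ j, ψt j z
      = -(z * (1 + (n : ℂ)⁻¹
          * ((Matrix.diagonal fun i => ((σ i j : ℂ))^2) * Tmat A ψ ψt z).trace))⁻¹)

open Metric


lemma isOpen_offRplus : IsOpen offRplus := by
  have h : offRplus = ((Complex.im ⁻¹' {0}) ∩ (Complex.re ⁻¹' Set.Ici 0))ᶜ := by
    ext z; simp [offRplus]
  rw [h]
  exact (((isClosed_singleton.preimage Complex.continuous_im).inter
    (isClosed_Ici.preimage Complex.continuous_re))).isOpen_compl

lemma offRplus_cases {z : ℂ} (hz : z ∈ offRplus) : z.im ≠ 0 ∨ (z.im = 0 ∧ z.re < 0) := by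
  by_cases him : z.im = 0
  · right; refine ⟨him, ?_⟩; by_contra h; exact hz ⟨him, not_lt.mp h⟩
  · left; exact him

lemma offRplus_bound {z : ℂ} (hz : z ∈ offRplus) :
    ∃ c : ℝ, 0 < c ∧ ∀ t : ℝ, 0 ≤ t → c ≤ ‖(t : ℂ) - z‖ := by
  refine ⟨max |z.im| (-z.re), ?_, ?_⟩
  · rcases offRplus_cases hz with h | ⟨_, h⟩
    · exact lt_max_of_lt_left (abs_pos.mpr h)
    · exact lt_max_of_lt_right (by linarith)
  · intro t ht
    apply max_le
    · calc |z.im| = |((t:ℂ) - z).im| := by simp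
        _ ≤ ‖_‖ := Complex.abs_im_le_norm _
    · rcases le_or_gt (-z.re) 0 with h | h
      · exact h.trans (norm_nonneg _)
      · calc -z.re ≤ t - z.re := by linarith
          _ ≤ |t - z.re| := le_abs_self _
          _ = |((t:ℂ) - z).re| := by simp
          _ ≤ ‖_‖ := Complex.abs_re_le_norm _

lemma meas_kernel (z : ℂ) : Measurable fun t : ℝ => ((t:ℂ) - z)⁻¹ :=
  (Complex.measurable_ofReal.sub measurable_const).inv

lemma ae_nonneg (μ : Measure ℝ) (hμ0 : μ (Set.Iio 0) = 0) : ∀ᵐ t ∂μ, 0 ≤ t := by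
  rw [ae_iff]
  convert hμ0 using 2
  ext t; simp [not_le]

lemma integrable_kernel (μ : Measure ℝ) [IsProbabilityMeasure μ] (hμ0 : μ (Set.Iio 0) = 0)
    {z : ℂ} (hz : z ∈ offRplus) : Integrable (fun t : ℝ => ((t:ℂ) - z)⁻¹) μ := by
  obtain ⟨c, hc, hbd⟩ := offRplus_bound hz
  refine Integrable.mono' (integrable_const c⁻¹) (meas_kernel z).aestronglyMeasurable ?_
  filter_upwards [ae_nonneg μ hμ0] with t ht
  rw [norm_inv]
  exact inv_anti₀ hc (by simpa using hbd t ht)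

def Pfun (z w : ℂ) : ℝ := if z.im = 0 then w.re else Real.sign z.im * w.im
def Lfun (z w : ℂ) : ℝ := if z.im = 0 then w.re else -(Real.sign z.im * w.im)

lemma Lfun_zero (z : ℂ) : Lfun z 0 = 0 := by unfold Lfun; split <;> simp
lemma Pfun_ne_zero {z w : ℂ} (h : 0 < Pfun z w) : w ≠ 0 := by
  rintro rfl; unfold Pfun at h; split at h <;> simp at h

lemma Lfun_inv (z w : ℂ) : Lfun z w⁻¹ = Pfun z w / Complex.normSq w := by
  unfold Lfun Pfun
  split <;> simp [Complex.inv_re, Complex.inv_im] <;> ring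

lemma Lfun_sub (z u w : ℂ) : Lfun z (u - w) = Lfun z u - Lfun z w := by
  unfold Lfun; split <;> simp <;> ring

lemma Lfun_sum {ι : Type*} (z : ℂ) (s : Finset ι) (f : ι → ℂ) :
    Lfun z (∑ i ∈ s, f i) = ∑ i ∈ s, Lfun z (f i) := by
  unfold Lfun; split
  · simp [Complex.re_sum]
  · simp [Complex.im_sum, Finset.mul_sum]

lemma Lfun_real_mul (z : ℂ) (c : ℝ) (w : ℂ) : Lfun z ((c:ℂ) * w) = c * Lfun z w := by
  unfold Lfun; split <;> simp [Complex.mul_re, Complex.mul_im] <;> ring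

lemma measure_Ici_pos (μ : Measure ℝ) [IsProbabilityMeasure μ] (hμ0 : μ (Set.Iio 0) = 0) :
    0 < μ (Set.Ici 0) := by
  by_contra h
  push_neg at h
  have h0 : μ (Set.Ici 0) = 0 := le_antisymm h (zero_le)
  have : μ Set.univ ≤ μ (Set.Ici 0) + μ (Set.Iio 0) := by
    rw [show (Set.univ : Set ℝ) = Set.Ici 0 ∪ Set.Iio 0 by rw [Set.union_comm, Set.Iio_union_Ici]]
    exact measure_union_le _ _
  rw [h0, hμ0, measure_univ] at this
  simp at this

lemma integral_re' {f : ℝ → ℂ} {μ : Measure ℝ} (hf : Integrable f μ) :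
    (∫ t, f t ∂μ).re = ∫ t, (f t).re ∂μ := by
  simpa using (Complex.reCLM.integral_comp_comm hf).symm

lemma integral_im' {f : ℝ → ℂ} {μ : Measure ℝ} (hf : Integrable f μ) :
    (∫ t, f t ∂μ).im = ∫ t, (f t).im ∂μ := by
  simpa using (Complex.imCLM.integral_comp_comm hf).symm

lemma stieltjes_props (μ : Measure ℝ) [IsProbabilityMeasure μ] (hμ0 : μ (Set.Iio 0) = 0)
    {z : ℂ} (hz : z ∈ offRplus) :
    0 < Pfun z (∫ t, ((t:ℂ) - z)⁻¹ ∂μ) ∧ Lfun z (z * ∫ t, ((t:ℂ) - z)⁻¹ ∂μ) ≤ 0 := by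
  have hInt := integrable_kernel μ hμ0 hz
  have hne : ∀ t : ℝ, 0 ≤ t → ((t:ℂ) - z) ≠ 0 := by
    obtain ⟨c, hc, hbd⟩ := offRplus_bound hz
    intro t ht h0
    have := hbd t ht
    rw [h0] at this
    simp at this
    linarith
  have hre : ∀ t : ℝ, (((t:ℂ) - z)⁻¹).re = (t - z.re) / Complex.normSq ((t:ℂ) - z) := by
    intro t; rw [Complex.inv_re]; simp
  have him' : ∀ t : ℝ, (((t:ℂ) - z)⁻¹).im = z.im / Complex.normSq ((t:ℂ) - z) := by
    intro t; rw [Complex.inv_im]; simp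
  have hfre : (∫ t, ((t:ℂ) - z)⁻¹ ∂μ).re = ∫ t, (((t:ℂ) - z)⁻¹).re ∂μ :=
    integral_re' hInt
  have hfim : (∫ t, ((t:ℂ) - z)⁻¹ ∂μ).im = ∫ t, (((t:ℂ) - z)⁻¹).im ∂μ :=
    integral_im' hInt
  rcases offRplus_cases hz with him | ⟨him, hrelt⟩
  · -- z.im ≠ 0
    have hs := Real.sign_mul_pos_of_ne_zero z.im him
    have hnsq : ∀ t : ℝ, 0 < Complex.normSq ((t:ℂ) - z) := by
      intro t
      refine Complex.normSq_pos.mpr fun h0 => him ?_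
      have := congrArg Complex.im h0
      simp at this
      exact this.symm ▸ rfl
    constructor
    · unfold Pfun
      rw [if_neg him, hfim]
      rw [← integral_const_mul]
      refine (integral_pos_iff_support_of_nonneg_ae ?_ ?_).mpr ?_
      · filter_upwards with t
        rw [him', ← mul_div_assoc]
        exact (div_pos hs (hnsq t)).le
      · exact (hInt.im.const_mul _)
      · have : Function.support (fun t : ℝ => Real.sign z.im * (((t:ℂ) - z)⁻¹).im) = Set.univ := by
          ext t
          simp only [Function.mem_support, Set.mem_univ, iff_true]
          rw [him', ← mul_div_assoc]
          exact (div_pos hs (hnsq t)).ne'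
        rw [this, measure_univ]
        norm_num
    · unfold Lfun
      rw [if_neg him, neg_nonpos]
      have hzint : Integrable (fun t : ℝ => z * ((t:ℂ) - z)⁻¹) μ := hInt.const_mul z
      have : (z * ∫ t, ((t:ℂ) - z)⁻¹ ∂μ).im = ∫ t, (z * ((t:ℂ) - z)⁻¹).im ∂μ := by
        rw [← integral_const_mul]
        exact integral_im' hzint
      rw [this, ← integral_const_mul]
      refine integral_nonneg_of_ae ?_
      filter_upwards [ae_nonneg μ hμ0] with t ht
      have : (z * ((t:ℂ) - z)⁻¹).im = z.im * t / Complex.normSq ((t:ℂ) - z) := by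
        rw [Complex.mul_im, hre, him']
        field_simp
        ring
      rw [this]
      have h1 : Real.sign z.im * (z.im * t / Complex.normSq ((t:ℂ) - z))
          = (Real.sign z.im * z.im) * t / Complex.normSq ((t:ℂ) - z) := by ring
      rw [h1]
      exact mul_nonneg (mul_nonneg hs.le ht) (inv_nonneg.mpr (hnsq t).le) |>.trans_eq (by ring)
  · -- z.im = 0, z.re < 0
    have hnsq : ∀ t : ℝ, 0 ≤ t → 0 < Complex.normSq ((t:ℂ) - z) :=
      fun t ht => Complex.normSq_pos.mpr (hne t ht)
    have hposre : ∀ t : ℝ, 0 ≤ t → 0 < (((t:ℂ) - z)⁻¹).re := by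
      intro t ht
      rw [hre]
      exact div_pos (by linarith) (hnsq t ht)
    have hfrepos : 0 < (∫ t, ((t:ℂ) - z)⁻¹ ∂μ).re := by
      rw [hfre]
      refine (integral_pos_iff_support_of_nonneg_ae ?_ ?_).mpr ?_
      · filter_upwards [ae_nonneg μ hμ0] with t ht
        exact (hposre t ht).le
      · exact hInt.re
      · refine lt_of_lt_of_le (measure_Ici_pos μ hμ0) (measure_mono ?_)
        intro t ht
        exact (hposre t ht).ne'
    constructor
    · unfold Pfun
      rw [if_pos him]
      exact hfrepos
    · unfold Lfun
      rw [if_pos him, Complex.mul_re, him]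
      simp only [zero_mul, sub_zero]
      nlinarith

lemma quad_form {a b : ℕ} (B : Matrix (Fin a) (Fin b) ℂ)
    (hB : ∀ i j, (starRingEnd ℂ) (B i j) = B i j)
    (d : Fin a → ℂ) (e : Fin b → ℂ) (z : ℂ) (x : Fin a → ℂ) :
    star x ⬝ᵥ (Matrix.diagonal d - z • (B * Matrix.diagonal e * Bᵀ)) *ᵥ x
      = (∑ i, (Complex.normSq (x i) : ℂ) * d i)
        - z * ∑ j, (Complex.normSq ((Bᵀ *ᵥ x) j) : ℂ) * e j := by
  have hy : Matrix.vecMul (star x) B = star (Bᵀ *ᵥ x) := by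
    ext j
    simp only [Matrix.vecMul, Matrix.mulVec, dotProduct, Pi.star_apply,
      Matrix.transpose_apply, star_sum, star_mul', RCLike.star_def]
    exact Finset.sum_congr rfl fun i _ => by rw [hB]; ring
  rw [Matrix.sub_mulVec, dotProduct_sub, Matrix.smul_mulVec,
    dotProduct_smul, smul_eq_mul]
  congr 1
  · simp only [dotProduct, Pi.star_apply, Matrix.mulVec_diagonal]
    exact Finset.sum_congr rfl fun i _ => by
      rw [Complex.normSq_eq_conj_mul_self, RCLike.star_def]; ring
  · congr 1
    have hmm : (B * Matrix.diagonal e * Bᵀ) *ᵥ x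
        = B *ᵥ ((Matrix.diagonal e) *ᵥ (Bᵀ *ᵥ x)) := by
      rw [Matrix.mulVec_mulVec, Matrix.mulVec_mulVec]
    rw [hmm, Matrix.dotProduct_mulVec, hy]
    simp only [dotProduct, Pi.star_apply, Matrix.mulVec_diagonal]
    exact Finset.sum_congr rfl fun j _ => by
      rw [Complex.normSq_eq_conj_mul_self, RCLike.star_def]; ring

lemma isUnit_aux {a b : ℕ} (B : Matrix (Fin a) (Fin b) ℂ)
    (hB : ∀ i j, (starRingEnd ℂ) (B i j) = B i j)
    (d : Fin a → ℂ) (e : Fin b → ℂ) {z : ℂ}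
    (hd : ∀ i, 0 < Lfun z (d i)) (he : ∀ j, Lfun z (z * e j) ≤ 0) :
    IsUnit (Matrix.diagonal d - z • (B * Matrix.diagonal e * Bᵀ)) := by
  rw [Matrix.isUnit_iff_isUnit_det, isUnit_iff_ne_zero]
  intro hdet
  obtain ⟨v, hv, hv0⟩ := Matrix.exists_mulVec_eq_zero_iff.mpr hdet
  have h0 : star v ⬝ᵥ (Matrix.diagonal d - z • (B * Matrix.diagonal e * Bᵀ)) *ᵥ v = 0 := by
    rw [hv0, dotProduct_zero]
  rw [quad_form B hB d e z v] at h0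
  have hL := congrArg (Lfun z) h0
  rw [Lfun_zero, Lfun_sub, Lfun_sum, Finset.mul_sum, Lfun_sum] at hL
  have h1 : ∀ i, Lfun z ((Complex.normSq (v i) : ℂ) * d i)
      = Complex.normSq (v i) * Lfun z (d i) := fun i => Lfun_real_mul z _ _
  have h2 : ∀ j, Lfun z (z * ((Complex.normSq ((Bᵀ *ᵥ v) j) : ℂ) * e j))
      = Complex.normSq ((Bᵀ *ᵥ v) j) * Lfun z (z * e j) := by
    intro j
    rw [show z * ((Complex.normSq ((Bᵀ *ᵥ v) j) : ℂ) * e j)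
        = (Complex.normSq ((Bᵀ *ᵥ v) j) : ℂ) * (z * e j) by ring]
    exact Lfun_real_mul z _ _
  simp only [h1, h2] at hL
  obtain ⟨i0, hi0⟩ := Function.ne_iff.mp hv
  have hpos : 0 < ∑ i, Complex.normSq (v i) * Lfun z (d i) := by
    refine Finset.sum_pos' (fun i _ => mul_nonneg (Complex.normSq_nonneg _) (hd i).le)
      ⟨i0, Finset.mem_univ _, ?_⟩
    exact mul_pos (Complex.normSq_pos.mpr hi0) (hd i0)
  have hneg : ∑ j, Complex.normSq ((Bᵀ *ᵥ v) j) * Lfun z (z * e j) ≤ 0 :=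
    Finset.sum_nonpos fun j _ => mul_nonpos_of_nonneg_of_nonpos (Complex.normSq_nonneg _) (he j)
  linarith
lemma stieltjes_diffAt (μ : Measure ℝ) [IsProbabilityMeasure μ] (hμ0 : μ (Set.Iio 0) = 0)
    {z₀ : ℂ} (hz : z₀ ∈ offRplus) :
    DifferentiableAt ℂ (fun z => ∫ t, ((t:ℂ) - z)⁻¹ ∂μ) z₀ := by
  obtain ⟨c, hc, hbd⟩ := offRplus_bound hz
  have hball : ∀ x ∈ ball z₀ (c/2), ∀ t : ℝ, 0 ≤ t → c/2 ≤ ‖(t:ℂ) - x‖ := by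
    intro x hx t ht
    have h1 : ‖(t:ℂ) - z₀‖ ≤ ‖(t:ℂ) - x‖ + ‖x - z₀‖ := by
      calc ‖(t:ℂ) - z₀‖ = ‖((t:ℂ) - x) + (x - z₀)‖ := by ring_nf
        _ ≤ _ := norm_add_le _ _
    have h2 : ‖x - z₀‖ < c/2 := by
      rw [mem_ball, Complex.dist_eq] at hx; exact hx
    have := hbd t ht
    linarith
  have key := hasDerivAt_integral_of_dominated_loc_of_deriv_le
    (F := fun (z : ℂ) (t : ℝ) => ((t:ℂ) - z)⁻¹)
    (F' := fun (z : ℂ) (t : ℝ) => (((t:ℂ) - z)^2)⁻¹)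
    (bound := fun _ : ℝ => ((c/2)^2)⁻¹) (μ := μ) (x₀ := z₀) (ball_mem_nhds z₀ (half_pos hc))
    (Eventually.of_forall fun x => (meas_kernel x).aestronglyMeasurable)
    (integrable_kernel μ hμ0 hz)
    (((Complex.measurable_ofReal.sub measurable_const).pow_const 2).inv.aestronglyMeasurable)
    ?_ (integrable_const _) ?_
  · exact key.2.differentiableAt
  · filter_upwards [ae_nonneg μ hμ0] with t ht
    intro x hx
    have hb := hball x hx t ht
    rw [norm_inv, norm_pow]
    apply inv_anti₀ (by positivity)
    exact pow_le_pow_left₀ (by positivity) hb 2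
  · filter_upwards [ae_nonneg μ hμ0] with t ht
    intro x hx
    have hb := hball x hx t ht
    have hne : (t:ℂ) - x ≠ 0 := by
      intro h; rw [h] at hb; simp at hb; linarith
    have h1 : HasDerivAt (fun y : ℂ => (t:ℂ) - y) (-1) x := by
      simpa using (hasDerivAt_id x).const_sub (t:ℂ)
    have h2 := h1.inv hne
    convert h2 using 1
    · rfl
    · rfl
    · ring


lemma stieltjes_main {f : ℂ → ℂ} (hf : IsStieltjesPM f) :
    DifferentiableOn ℂ f offRplus ∧
    ∀ z ∈ offRplus, 0 < Pfun z (f z) ∧ Lfun z (z * f z) ≤ 0 := by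
  obtain ⟨μ, hprob, hμ0, hrep⟩ := hf
  constructor
  · intro z hz
    have hd := stieltjes_diffAt μ hμ0 hz
    have hev : f =ᶠ[nhds z] (fun w => ∫ t, ((t:ℂ) - w)⁻¹ ∂μ) :=
      eventually_of_mem (isOpen_offRplus.mem_nhds hz) (fun w hw => hrep w hw)
    exact (hd.congr_of_eventuallyEq hev).differentiableWithinAt
  · intro z hz
    rw [hrep z hz]
    exact stieltjes_props μ hμ0 hz

lemma stieltjes_ne_zero {f : ℂ → ℂ} (hf : IsStieltjesPM f) {z : ℂ} (hz : z ∈ offRplus) :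
    f z ≠ 0 := Pfun_ne_zero ((stieltjes_main hf).2 z hz).1

lemma stieltjes_Lfun_inv_pos {f : ℂ → ℂ} (hf : IsStieltjesPM f) {z : ℂ} (hz : z ∈ offRplus) :
    0 < Lfun z (f z)⁻¹ := by
  rw [Lfun_inv]
  exact div_pos ((stieltjes_main hf).2 z hz).1
    (Complex.normSq_pos.mpr (stieltjes_ne_zero hf hz))

lemma inv_diag_of_ne {m : ℕ} {v : Fin m → ℂ} (hv : ∀ i, v i ≠ 0) :
    (Matrix.diagonal v)⁻¹ = Matrix.diagonal (fun i => (v i)⁻¹) := by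
  apply Matrix.inv_eq_right_inv
  rw [Matrix.diagonal_mul_diagonal,
    show (fun i => v i * (v i)⁻¹) = fun _ => (1:ℂ) from funext fun i => mul_inv_cancel₀ (hv i),
    Matrix.diagonal_one]

lemma diffOn_prod {ι : Type*} (u : Finset ι) (f : ι → ℂ → ℂ) {s : Set ℂ}
    (h : ∀ i ∈ u, DifferentiableOn ℂ (f i) s) :
    DifferentiableOn ℂ (fun z => ∏ i ∈ u, f i z) s := by
  classical
  induction u using Finset.induction_on with
  | empty => simpa using differentiableOn_const (1:ℂ)
  | insert a u' hni ih =>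
    simp only [Finset.prod_insert hni]
    exact (h a (Finset.mem_insert_self a u')).mul
      (ih fun i hi => h i (Finset.mem_insert_of_mem hi))

lemma diffOn_det {m : ℕ} {M : ℂ → Matrix (Fin m) (Fin m) ℂ} {s : Set ℂ}
    (h : ∀ i j, DifferentiableOn ℂ (fun z => M z i j) s) :
    DifferentiableOn ℂ (fun z => (M z).det) s := by
  simp only [Matrix.det_apply]
  apply DifferentiableOn.fun_sum
  intro σ _
  have : ∀ z, (Equiv.Perm.sign σ • ∏ i, M z (σ i) i)
      = ((Equiv.Perm.sign σ : ℤ) : ℂ) * ∏ i, M z (σ i) i := by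
    intro z; rw [Units.smul_def, zsmul_eq_mul]
  simp only [this]
  exact (diffOn_prod Finset.univ (fun i z => M z (σ i) i)
    (fun i _ => h (σ i) i)).const_mul _

lemma diffOn_adjugate {m : ℕ} {M : ℂ → Matrix (Fin m) (Fin m) ℂ} {s : Set ℂ}
    (h : ∀ i j, DifferentiableOn ℂ (fun z => M z i j) s) (i j : Fin m) :
    DifferentiableOn ℂ (fun z => (M z).adjugate i j) s := by
  simp only [Matrix.adjugate_apply]
  apply diffOn_det
  intro i' k
  simp only [Matrix.updateRow_apply]
  by_cases hij : i' = j
  · simp only [if_pos hij]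
    exact differentiableOn_const _
  · simp only [if_neg hij]
    exact h i' k

lemma diffOn_inv_entry {m : ℕ} {M : ℂ → Matrix (Fin m) (Fin m) ℂ} {s : Set ℂ}
    (h : ∀ i j, DifferentiableOn ℂ (fun z => M z i j) s)
    (hdet : ∀ z ∈ s, (M z).det ≠ 0) (i j : Fin m) :
    DifferentiableOn ℂ (fun z => (M z)⁻¹ i j) s := by
  simp only [Matrix.inv_def, Matrix.smul_apply, Ring.inverse_eq_inv', smul_eq_mul]
  exact ((diffOn_det h).inv hdet).mul (diffOn_adjugate h i j)

lemma diffOn_Mat_entry {a b : ℕ} (B : Matrix (Fin a) (Fin b) ℂ)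
    (g : Fin a → ℂ → ℂ) (h : Fin b → ℂ → ℂ)
    (hg : ∀ i, DifferentiableOn ℂ (g i) offRplus)
    (hgne : ∀ i, ∀ z ∈ offRplus, g i z ≠ 0)
    (hh : ∀ j, DifferentiableOn ℂ (h j) offRplus)
    (i k : Fin a) :
    DifferentiableOn ℂ
      (fun z => ((Matrix.diagonal fun i' => g i' z)⁻¹
        - z • (B * Matrix.diagonal (fun j => h j z) * Bᵀ)) i k) offRplus := by
  have hrhs : DifferentiableOn ℂ
      (fun z => (if i = k then (g i z)⁻¹ else 0) - z * ∑ j, B i j * h j z * B k j) offRplus := by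
    apply DifferentiableOn.sub
    · by_cases hik : i = k
      · simp only [if_pos hik]
        exact (hg i).inv (fun z hz => hgne i z hz)
      · simp only [if_neg hik]
        exact differentiableOn_const _
    · exact differentiableOn_id.mul (DifferentiableOn.fun_sum fun j _ =>
        ((hh j).const_mul (B i j)).mul_const (B k j))
  apply hrhs.congr
  intro z hz
  rw [inv_diag_of_ne (fun i' => hgne i' z hz)]
  simp [Matrix.sub_apply, Matrix.smul_apply, smul_eq_mul, Matrix.diagonal_apply,
    Matrix.mul_apply, Matrix.mul_diagonal, Matrix.transpose_apply]

lemma diffOn_T {a b : ℕ} (B : Matrix (Fin a) (Fin b) ℂ)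
    (g : Fin a → ℂ → ℂ) (h : Fin b → ℂ → ℂ)
    (hg : ∀ i, DifferentiableOn ℂ (g i) offRplus)
    (hgne : ∀ i, ∀ z ∈ offRplus, g i z ≠ 0)
    (hh : ∀ j, DifferentiableOn ℂ (h j) offRplus)
    (hu : ∀ z ∈ offRplus, IsUnit ((Matrix.diagonal fun i' => g i' z)⁻¹
        - z • (B * Matrix.diagonal (fun j => h j z) * Bᵀ)))
    (i k : Fin a) :
    DifferentiableOn ℂ
      (fun z => ((Matrix.diagonal fun i' => g i' z)⁻¹
        - z • (B * Matrix.diagonal (fun j => h j z) * Bᵀ))⁻¹ i k) offRplus :=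
  diffOn_inv_entry (fun i k => diffOn_Mat_entry B g h hg hgne hh i k)
    (fun z hz => isUnit_iff_ne_zero.mp ((Matrix.isUnit_iff_isUnit_det _).mp (hu z hz))) i k

/-- Proposition 5.1 part 1: for Stieltjes transforms `γ_i, γ̃_j` of probability
measures on `ℝ₊`, the matrices `Γ⁻¹ - zAΓ̃Aᵀ` and `Γ̃⁻¹ - zAᵀΓA` are invertible on
`ℂ ∖ ℝ₊`, and `Υ = (Γ⁻¹ - zAΓ̃Aᵀ)⁻¹`, `Υ̃ = (Γ̃⁻¹ - zAᵀΓA)⁻¹` are entrywise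
holomorphic there. -/
theorem stmt_5 (N n : ℕ) (A : Matrix (Fin N) (Fin n) ℝ)
    (γ : Fin N → ℂ → ℂ) (γt : Fin n → ℂ → ℂ)
    (hγ : ∀ i, IsStieltjesPM (γ i)) (hγt : ∀ j, IsStieltjesPM (γt j)) :
    (∀ z ∈ offRplus,
      IsUnit ((Matrix.diagonal fun i => γ i z)⁻¹
        - z • (A.map Complex.ofReal * Matrix.diagonal (fun j => γt j z)
            * (A.map Complex.ofReal)ᵀ))
      ∧ IsUnit ((Matrix.diagonal fun j => γt j z)⁻¹
        - z • ((A.map Complex.ofReal)ᵀ * Matrix.diagonal (fun i => γ i z)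
            * A.map Complex.ofReal)))
    ∧ (∀ i j : Fin N, DifferentiableOn ℂ (fun z => Tmat A γ γt z i j) offRplus)
    ∧ (∀ i j : Fin n, DifferentiableOn ℂ (fun z => Ttmat A γ γt z i j) offRplus) := by
  set B : Matrix (Fin N) (Fin n) ℂ := A.map Complex.ofReal with hBdef
  have hB : ∀ i j, (starRingEnd ℂ) (B i j) = B i j := by
    intro i j; simp [hBdef, Matrix.map_apply]
  have hBt : ∀ j i, (starRingEnd ℂ) (Bᵀ j i) = Bᵀ j i := by
    intro j i; simp [hBdef, Matrix.map_apply]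
  have hγne : ∀ i, ∀ z ∈ offRplus, γ i z ≠ 0 := fun i z hz => stieltjes_ne_zero (hγ i) hz
  have hγtne : ∀ j, ∀ z ∈ offRplus, γt j z ≠ 0 := fun j z hz => stieltjes_ne_zero (hγt j) hz
  have hunit : ∀ z ∈ offRplus,
      IsUnit ((Matrix.diagonal fun i => γ i z)⁻¹
        - z • (B * Matrix.diagonal (fun j => γt j z) * Bᵀ))
      ∧ IsUnit ((Matrix.diagonal fun j => γt j z)⁻¹
        - z • (Bᵀ * Matrix.diagonal (fun i => γ i z) * Bᵀᵀ)) := by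
    intro z hz
    constructor
    · rw [inv_diag_of_ne (fun i => hγne i z hz)]
      exact isUnit_aux B hB _ _
        (fun i => stieltjes_Lfun_inv_pos (hγ i) hz)
        (fun j => ((stieltjes_main (hγt j)).2 z hz).2)
    · rw [inv_diag_of_ne (fun j => hγtne j z hz)]
      exact isUnit_aux Bᵀ hBt _ _
        (fun j => stieltjes_Lfun_inv_pos (hγt j) hz)
        (fun i => ((stieltjes_main (hγ i)).2 z hz).2)
  refine ⟨fun z hz => ⟨(hunit z hz).1, by simpa [Matrix.transpose_transpose] using (hunit z hz).2⟩,
    ?_, ?_⟩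
  · intro i j
    have := diffOn_T B γ γt (fun i => (stieltjes_main (hγ i)).1) hγne
      (fun j => (stieltjes_main (hγt j)).1) (fun z hz => (hunit z hz).1) i j
    simpa [Tmat] using this
  · intro i j
    have := diffOn_T Bᵀ γt γ (fun j => (stieltjes_main (hγt j)).1) hγtne
      (fun i => (stieltjes_main (hγ i)).1) (fun z hz => (hunit z hz).2) i j
    simpa [Ttmat, Matrix.transpose_transpose] using this
end
end

section
/- For every z ∈ ℂ+, Υ(z)Υ(z)* ≤ I_N/(Im z)² and Υ̃(z)Υ̃(z)* ≤ I_n/(Im z)² in the sense of Hermitian positive semidefinite ordering; in particular the spectral norms of Υ(z) and Υ̃(z) are at most 1/Im z. -/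
open MeasureTheory Matrix Complex Filter
open scoped Topology ComplexOrder

noncomputable section

def evec {m : ℕ} (x : Fin m → ℂ) : EuclideanSpace ℂ (Fin m) := (WithLp.equiv 2 (Fin m → ℂ)).symm x

lemma norm_evec_sq {m : ℕ} (x : Fin m → ℂ) : ‖evec x‖ ^ 2 = ∑ i, Complex.normSq (x i) := by
  rw [evec, EuclideanSpace.norm_eq, Real.sq_sqrt (by positivity)]
  refine Finset.sum_congr rfl fun i _ => ?_
  rw [Complex.sq_norm]; rfl

lemma evec_inner {m : ℕ} (x y : Fin m → ℂ) :
    (inner ℂ (evec x) (evec y) : ℂ) = star x ⬝ᵥ y :=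
  (EuclideanSpace.inner_toLp_toLp x y).trans (dotProduct_comm _ _)

lemma key_bound {m : ℕ} (B : Matrix (Fin m) (Fin m) ℂ) (c : ℝ) (hc : 0 < c)
    (h : ∀ x : Fin m → ℂ, c * ∑ i, Complex.normSq (x i) ≤ |((star x) ⬝ᵥ (B *ᵥ x)).im|) :
    ∀ u : Fin m → ℂ, ‖evec (B⁻¹ *ᵥ u)‖ ≤ c⁻¹ * ‖evec u‖ := by
  have step1 : ∀ x : Fin m → ℂ, c * ‖evec x‖ ≤ ‖evec (B *ᵥ x)‖ := by
    intro x
    have h2 : |((star x) ⬝ᵥ (B *ᵥ x)).im| ≤ ‖evec x‖ * ‖evec (B *ᵥ x)‖ := by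
      calc |((star x) ⬝ᵥ (B *ᵥ x)).im| ≤ ‖(star x) ⬝ᵥ (B *ᵥ x)‖ :=
            Complex.abs_im_le_norm _
        _ = ‖(inner ℂ (evec x) (evec (B *ᵥ x)) : ℂ)‖ := by rw [evec_inner]
        _ ≤ ‖evec x‖ * ‖evec (B *ᵥ x)‖ := norm_inner_le_norm _ _
    have h3 : c * ‖evec x‖ ^ 2 ≤ ‖evec x‖ * ‖evec (B *ᵥ x)‖ := by
      rw [norm_evec_sq]; exact le_trans (h x) h2
    rcases eq_or_lt_of_le (norm_nonneg (evec x)) with h0 | h0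
    · nlinarith [norm_nonneg (evec (B *ᵥ x))]
    · nlinarith
  have hinj : Function.Injective B.mulVec := by
    intro x y hxy
    have hz : B *ᵥ (x - y) = 0 := by rw [Matrix.mulVec_sub, hxy, sub_self]
    have := step1 (x - y)
    rw [hz] at this
    have h0 : ‖evec (x - y)‖ = 0 := by
      have : c * ‖evec (x - y)‖ ≤ 0 := by simpa [evec] using this
      nlinarith [norm_nonneg (evec (x - y))]
    have : evec (x - y) = 0 := norm_eq_zero.mp h0
    have : x - y = 0 := by
      have := congrArg (WithLp.equiv 2 (Fin m → ℂ)) this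
      simpa [evec] using this
    exact sub_eq_zero.mp this
  have hunit : IsUnit B := Matrix.mulVec_injective_iff_isUnit.mp hinj
  have hBB : B * B⁻¹ = 1 := Matrix.mul_nonsing_inv B ((Matrix.isUnit_iff_isUnit_det B).mp hunit)
  intro u
  have h1 := step1 (B⁻¹ *ᵥ u)
  rw [Matrix.mulVec_mulVec, hBB, Matrix.one_mulVec] at h1
  calc ‖evec (B⁻¹ *ᵥ u)‖ = c⁻¹ * (c * ‖evec (B⁻¹ *ᵥ u)‖) := by field_simp
    _ ≤ c⁻¹ * ‖evec u‖ := by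
        exact mul_le_mul_of_nonneg_left h1 (by positivity)

lemma star_vecMul_real {m k : ℕ} (M : Matrix (Fin m) (Fin k) ℝ) (x : Fin m → ℂ) :
    star x ᵥ* (M.map Complex.ofReal) = star ((M.map Complex.ofReal)ᵀ *ᵥ x) := by
  ext j
  simp [Matrix.vecMul, Matrix.mulVec, dotProduct, Matrix.map_apply, star_sum,
    mul_comm]

lemma star_dot_diagonal {m : ℕ} (g : Fin m → ℂ) (y : Fin m → ℂ) :
    star y ⬝ᵥ ((Matrix.diagonal g) *ᵥ y) = ∑ j, g j * (Complex.normSq (y j) : ℂ) := by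
  refine Finset.sum_congr rfl fun j _ => ?_
  rw [Matrix.mulVec_diagonal]
  simp [Complex.normSq_eq_conj_mul_self]
  ring

lemma qf_sub {m k : ℕ} (M : Matrix (Fin m) (Fin k) ℝ) (d : Fin m → ℂ) (g : Fin k → ℂ)
    (x : Fin m → ℂ) :
    star x ⬝ᵥ ((Matrix.diagonal d
        - M.map Complex.ofReal * Matrix.diagonal g * (M.map Complex.ofReal)ᵀ) *ᵥ x)
      = ∑ i, d i * (Complex.normSq (x i) : ℂ)
        - ∑ j, g j * (Complex.normSq (((M.map Complex.ofReal)ᵀ *ᵥ x) j) : ℂ) := by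
  set A' := M.map Complex.ofReal
  rw [Matrix.sub_mulVec, dotProduct_sub, star_dot_diagonal]
  congr 1
  have h1 : (A' * Matrix.diagonal g * A'ᵀ) *ᵥ x = A' *ᵥ ((Matrix.diagonal g) *ᵥ (A'ᵀ *ᵥ x)) := by
    rw [Matrix.mulVec_mulVec, Matrix.mulVec_mulVec]
  rw [h1, Matrix.dotProduct_mulVec, star_vecMul_real, ← star_dot_diagonal]

lemma coercive {m k : ℕ} (M : Matrix (Fin m) (Fin k) ℝ) (d : Fin m → ℂ) (g : Fin k → ℂ)
    (c : ℝ) (hc : 0 < c) (hd : ∀ i, (d i).im ≤ -c) (hg : ∀ j, 0 ≤ (g j).im) :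
    ∀ x : Fin m → ℂ, c * ∑ i, Complex.normSq (x i)
      ≤ |((star x) ⬝ᵥ ((Matrix.diagonal d
          - M.map Complex.ofReal * Matrix.diagonal g * (M.map Complex.ofReal)ᵀ) *ᵥ x)).im| := by
  intro x
  rw [qf_sub]
  set y := (M.map Complex.ofReal)ᵀ *ᵥ x
  have him : (∑ i, d i * (Complex.normSq (x i) : ℂ)
      - ∑ j, g j * (Complex.normSq (y j) : ℂ)).im
      = ∑ i, (d i).im * Complex.normSq (x i) - ∑ j, (g j).im * Complex.normSq (y j) := by
    simp [Complex.im_sum, Complex.sub_im, Complex.mul_im]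
  rw [him]
  have h1 : ∑ i, (d i).im * Complex.normSq (x i) ≤ -c * ∑ i, Complex.normSq (x i) := by
    rw [Finset.mul_sum]
    exact Finset.sum_le_sum fun i _ =>
      mul_le_mul_of_nonneg_right (hd i) (Complex.normSq_nonneg _)
  have h2 : 0 ≤ ∑ j, (g j).im * Complex.normSq (y j) :=
    Finset.sum_nonneg fun j _ => mul_nonneg (hg j) (Complex.normSq_nonneg _)
  have h3 : 0 ≤ ∑ i, Complex.normSq (x i) :=
    Finset.sum_nonneg fun i _ => Complex.normSq_nonneg _
  rw [abs_sub_comm]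
  refine le_trans ?_ (le_abs_self _)
  linarith

lemma qf_conjTranspose {m : ℕ} (B : Matrix (Fin m) (Fin m) ℂ) (x : Fin m → ℂ) :
    star x ⬝ᵥ (Bᴴ *ᵥ x) = star (star x ⬝ᵥ (B *ᵥ x)) := by
  rw [star_dotProduct, Matrix.star_mulVec, Matrix.conjTranspose_conjTranspose,
    ← Matrix.dotProduct_mulVec]

lemma psd_of_bound {m : ℕ} (T : Matrix (Fin m) (Fin m) ℂ) (c : ℝ) (hc : 0 < c)
    (h : ∀ u : Fin m → ℂ, ‖evec (Tᴴ *ᵥ u)‖ ≤ c⁻¹ * ‖evec u‖) :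
    (((c : ℂ) ^ 2)⁻¹ • (1 : Matrix (Fin m) (Fin m) ℂ) - T * Tᴴ).PosSemidef := by
  refine Matrix.PosSemidef.of_dotProduct_mulVec_nonneg ?_ ?_
  · unfold Matrix.IsHermitian
    rw [Matrix.conjTranspose_sub, Matrix.conjTranspose_smul, Matrix.conjTranspose_one,
      Matrix.conjTranspose_mul, Matrix.conjTranspose_conjTranspose]
    congr 1
    simp [← Complex.ofReal_pow]
  · intro x
    have hq : star x ⬝ᵥ ((((c : ℂ) ^ 2)⁻¹ • (1 : Matrix (Fin m) (Fin m) ℂ) - T * Tᴴ) *ᵥ x)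
        = (((c ^ 2)⁻¹ * ∑ i, Complex.normSq (x i) - ∑ i, Complex.normSq ((Tᴴ *ᵥ x) i) : ℝ) : ℂ) := by
      rw [Matrix.sub_mulVec, dotProduct_sub]
      have e1 : star x ⬝ᵥ ((((c : ℂ) ^ 2)⁻¹ • (1 : Matrix (Fin m) (Fin m) ℂ)) *ᵥ x)
          = ((c : ℂ) ^ 2)⁻¹ * ∑ i, (Complex.normSq (x i) : ℂ) := by
        rw [Matrix.smul_mulVec, Matrix.one_mulVec, dotProduct_smul]
        congr 1
        simp [dotProduct, Complex.normSq_eq_conj_mul_self]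
      have e2 : star x ⬝ᵥ ((T * Tᴴ) *ᵥ x) = ∑ i, (Complex.normSq ((Tᴴ *ᵥ x) i) : ℂ) := by
        rw [← Matrix.mulVec_mulVec, Matrix.dotProduct_mulVec]
        have : star x ᵥ* T = star (Tᴴ *ᵥ x) := by
          rw [Matrix.star_mulVec, Matrix.conjTranspose_conjTranspose]
        rw [this]
        simp [dotProduct, Complex.normSq_eq_conj_mul_self]
      rw [e1, e2]
      push_cast
      ring
    rw [hq]
    rw [Complex.zero_le_real]
    have key : ∑ i, Complex.normSq ((Tᴴ *ᵥ x) i) ≤ (c ^ 2)⁻¹ * ∑ i, Complex.normSq (x i) := by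
      have h1 := h x
      have h2 : ‖evec (Tᴴ *ᵥ x)‖ ^ 2 ≤ (c⁻¹ * ‖evec x‖) ^ 2 := by
        have := norm_nonneg (evec (Tᴴ *ᵥ x))
        nlinarith
      rw [norm_evec_sq] at h2
      calc ∑ i, Complex.normSq ((Tᴴ *ᵥ x) i) ≤ (c⁻¹ * ‖evec x‖) ^ 2 := h2
        _ = (c ^ 2)⁻¹ * ∑ i, Complex.normSq (x i) := by
            rw [mul_pow, norm_evec_sq, ← inv_pow]
    linarith

lemma stieltjes_facts {f : ℂ → ℂ} (hf : IsStieltjesPM f) {z : ℂ} (hz : 0 < z.im) :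
    ((f z)⁻¹).im ≤ -z.im ∧ 0 ≤ (z * f z).im := by
  obtain ⟨μ, hμ, hμ0, hrep⟩ := hf
  have hoff : z ∈ offRplus := fun h => absurd h.1 (ne_of_gt hz)
  have hrepz := hrep z hoff
  set F : ℝ → ℂ := fun t => ((t : ℂ) - z)⁻¹ with hF
  set G : ℝ → ℝ := fun t => (Complex.normSq ((t : ℂ) - z))⁻¹ with hG
  have hne : ∀ t : ℝ, ((t : ℂ) - z) ≠ 0 := by
    intro t h
    have := congrArg Complex.im h
    simp at this
    linarith
  have habs : ∀ t : ℝ, z.im ≤ ‖(t : ℂ) - z‖ := by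
    intro t
    calc z.im = |((t : ℂ) - z).im| := by
          rw [Complex.sub_im, Complex.ofReal_im, zero_sub, abs_neg, _root_.abs_of_pos hz]
      _ ≤ ‖(t : ℂ) - z‖ := Complex.abs_im_le_norm _
  have hGpos : ∀ t : ℝ, 0 < G t := fun t => inv_pos.mpr (Complex.normSq_pos.mpr (hne t))
  have hcont : Continuous fun t : ℝ => ((t : ℂ) - z) := Complex.continuous_ofReal.sub continuous_const
  have hFc : Continuous F := hcont.inv₀ hne
  have hGc : Continuous G :=
    (Complex.continuous_normSq.comp hcont).inv₀ fun t => Complex.normSq_pos.mpr (hne t) |>.ne'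
  have hFnorm : ∀ t : ℝ, ‖F t‖ = (‖(t : ℂ) - z‖)⁻¹ := by
    intro t; rw [hF]; simp
  have hFbd : ∀ t : ℝ, ‖F t‖ ≤ (z.im)⁻¹ := by
    intro t; rw [hFnorm]
    exact inv_anti₀ hz (habs t)
  have hFi : Integrable F μ :=
    Integrable.mono' (integrable_const ((z.im)⁻¹)) hFc.aestronglyMeasurable
      (ae_of_all μ hFbd)
  have hGbd : ∀ t : ℝ, ‖G t‖ ≤ (z.im ^ 2)⁻¹ := by
    intro t
    rw [Real.norm_eq_abs, abs_of_pos (hGpos t)]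
    refine inv_anti₀ (by positivity) ?_
    rw [← Complex.sq_norm]
    nlinarith [habs t, hz]
  have hGi : Integrable G μ :=
    Integrable.mono' (integrable_const ((z.im ^ 2)⁻¹)) hGc.aestronglyMeasurable
      (ae_of_all μ hGbd)
  have hFim : ∀ t : ℝ, (F t).im = z.im * G t := by
    intro t
    rw [hF, hG]
    simp only [Complex.inv_im, Complex.sub_im, Complex.ofReal_im]
    field_simp
    ring
  -- imaginary part of f z
  have him : (f z).im = z.im * ∫ t, G t ∂μ := by
    have h0 := integral_im (𝕜 := ℂ) hFi
    simp only [RCLike.im_to_complex] at h0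
    rw [hrepz, ← h0]
    simp_rw [hFim]
    exact integral_const_mul _ _
  have hIG : 0 < ∫ t, G t ∂μ := by
    rw [integral_pos_iff_support_of_nonneg (fun t => (hGpos t).le) hGi]
    have : Function.support G = Set.univ := Set.eq_univ_of_forall fun t => (hGpos t).ne'
    rw [this, measure_univ]
    norm_num
  have hfim : 0 < (f z).im := by rw [him]; positivity
  have hfne : f z ≠ 0 := fun h => by rw [h] at hfim; simp at hfim
  -- Cauchy-Schwarz
  set h : ℝ → ℝ := fun t => (‖(t : ℂ) - z‖)⁻¹ with hh
  have hhi : Integrable h μ := by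
    have : h = fun t => ‖F t‖ := funext fun t => (hFnorm t).symm
    rw [this]; exact hFi.norm
  have hsq : ∀ t, h t ^ 2 = G t := by
    intro t; rw [hh, hG]
    simp only
    rw [inv_pow, Complex.sq_norm]
  set I1 := ∫ t, h t ∂μ with hI1
  have hCS : I1 ^ 2 ≤ ∫ t, G t ∂μ := by
    have hexp : ∀ t, (h t - I1) ^ 2 = G t - 2 * I1 * h t + I1 ^ 2 := by
      intro t; rw [← hsq t]; ring
    have hint : ∫ t, (h t - I1) ^ 2 ∂μ = (∫ t, G t ∂μ) - I1 ^ 2 := by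
      simp_rw [hexp]
      have hint1 : Integrable (fun t => G t - 2 * I1 * h t) μ := hGi.sub (hhi.const_mul _)
      rw [integral_add hint1 (integrable_const _),
        integral_sub hGi (hhi.const_mul _), integral_const, integral_const_mul]
      simp only [probReal_univ, measure_univ, ENNReal.toReal_one, smul_eq_mul, one_mul, ← hI1]
      ring
    have hnn : 0 ≤ ∫ t, (h t - I1) ^ 2 ∂μ := integral_nonneg fun t => sq_nonneg _
    linarith
  have habsf : ‖f z‖ ≤ I1 := by
    rw [hrepz, hI1]
    have := norm_integral_le_integral_norm (μ := μ) F
    simpa [hFnorm] using this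
  have hnsqf : Complex.normSq (f z) ≤ ∫ t, G t ∂μ := by
    rw [← Complex.sq_norm]
    nlinarith [norm_nonneg (f z)]
  constructor
  · rw [Complex.inv_im, him]
    have hnsq : 0 < Complex.normSq (f z) := Complex.normSq_pos.mpr hfne
    rw [neg_div, neg_le_neg_iff, le_div_iff₀ hnsq]
    nlinarith
  · have hwz : z * f z = ∫ t, z * F t ∂μ := by
      rw [hrepz, integral_const_mul]
    have hmul : Integrable (fun t => z * F t) μ := hFi.const_mul z
    have himt : ∀ t : ℝ, (z * F t).im = t * (z.im * G t) := by
      intro t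
      have hid : z * F t = (t : ℂ) * F t - 1 := by
        rw [hF]
        simp only
        rw [eq_sub_iff_add_eq, ← mul_inv_cancel₀ (hne t)]
        ring
      rw [hid]
      simp [Complex.mul_im, hFim t]
    have hae : ∀ᵐ t ∂μ, 0 ≤ t := by
      rw [ae_iff]
      convert hμ0 using 2
      ext t; simp [not_le]
    have h0 := integral_im (𝕜 := ℂ) hmul
    simp only [RCLike.im_to_complex] at h0
    rw [hwz, ← h0]
    refine integral_nonneg_of_ae ?_
    filter_upwards [hae] with t ht
    rw [himt t]
    exact mul_nonneg ht (mul_pos hz (hGpos t)).le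


def Tgen {m k : ℕ} (M : Matrix (Fin m) (Fin k) ℝ)
    (ψ : Fin m → ℂ → ℂ) (ψt : Fin k → ℂ → ℂ) (z : ℂ) : Matrix (Fin m) (Fin m) ℂ :=
  ((Matrix.diagonal fun i => ψ i z)⁻¹
    - z • (M.map Complex.ofReal * Matrix.diagonal (fun j => ψt j z) * (M.map Complex.ofReal)ᵀ))⁻¹

lemma main_half {m k : ℕ} (M : Matrix (Fin m) (Fin k) ℝ)
    (ψ : Fin m → ℂ → ℂ) (ψt : Fin k → ℂ → ℂ)
    (hψ : ∀ i, IsStieltjesPM (ψ i)) (hψt : ∀ j, IsStieltjesPM (ψt j))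
    (z : ℂ) (hz : 0 < z.im) :
    (((z.im : ℂ) ^ 2)⁻¹ • (1 : Matrix (Fin m) (Fin m) ℂ)
      - Tgen M ψ ψt z * (Tgen M ψ ψt z)ᴴ).PosSemidef
    ∧ ∀ u : Fin m → ℂ, ‖evec (Tgen M ψ ψt z *ᵥ u)‖ ≤ (z.im)⁻¹ * ‖evec u‖ := by
  set d : Fin m → ℂ := fun i => (ψ i z)⁻¹ with hdd
  set g : Fin k → ℂ := fun j => z * ψt j z with hgg
  have hd : ∀ i, (d i).im ≤ -z.im := fun i => (stieltjes_facts (hψ i) hz).1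
  have hg : ∀ j, 0 ≤ (g j).im := fun j => (stieltjes_facts (hψt j) hz).2
  have hne : ∀ i, ψ i z ≠ 0 := by
    intro i h
    have := hd i
    rw [hdd] at this
    simp only [h, _root_.inv_zero, Complex.zero_im] at this
    linarith
  set M' := M.map Complex.ofReal with hM'
  set B := Matrix.diagonal d - M' * Matrix.diagonal g * M'ᵀ with hB
  have hTB : Tgen M ψ ψt z = B⁻¹ := by
    rw [Tgen, hB]
    congr 1
    congr 1
    · refine Matrix.inv_eq_left_inv ?_
      rw [Matrix.diagonal_mul_diagonal]
      rw [show (fun i => d i * ψ i z) = fun _ => (1 : ℂ) from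
        funext fun i => inv_mul_cancel₀ (hne i), Matrix.diagonal_one]
    · rw [show g = z • fun j => ψt j z from rfl, Matrix.diagonal_smul,
        Matrix.mul_smul, Matrix.smul_mul]
  have hco := coercive M d g z.im hz hd hg
  have hb1 := key_bound B z.im hz hco
  have hcoH : ∀ x : Fin m → ℂ, z.im * ∑ i, Complex.normSq (x i)
      ≤ |((star x) ⬝ᵥ (Bᴴ *ᵥ x)).im| := by
    intro x
    rw [qf_conjTranspose]
    calc z.im * ∑ i, Complex.normSq (x i) ≤ |((star x) ⬝ᵥ (B *ᵥ x)).im| := hco x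
      _ = |(star ((star x) ⬝ᵥ (B *ᵥ x))).im| := by
          rw [Complex.star_def, Complex.conj_im, abs_neg]
  have hb2 := key_bound Bᴴ z.im hz hcoH
  rw [← Matrix.conjTranspose_nonsing_inv] at hb2
  constructor
  · rw [hTB]
    exact psd_of_bound B⁻¹ z.im hz hb2
  · intro u
    rw [hTB]
    exact hb1 u

/-- Proposition 5.1 part 3: `Υ(z)Υ(z)* ≤ I_N / (Im z)²` and `Υ̃(z)Υ̃(z)* ≤ I_n / (Im z)²`
for `z ∈ ℂ⁺`; in particular the operator (spectral) norms of `Υ(z)` and `Υ̃(z)` are at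
most `1 / Im z`. -/
theorem stmt_7 (N n : ℕ) (A : Matrix (Fin N) (Fin n) ℝ)
    (γ : Fin N → ℂ → ℂ) (γt : Fin n → ℂ → ℂ)
    (hγ : ∀ i, IsStieltjesPM (γ i)) (hγt : ∀ j, IsStieltjesPM (γt j)) :
    ∀ z : ℂ, 0 < z.im →
      (((z.im : ℂ) ^ 2)⁻¹ • (1 : Matrix (Fin N) (Fin N) ℂ)
        - Tmat A γ γt z * (Tmat A γ γt z)ᴴ).PosSemidef
      ∧ (((z.im : ℂ) ^ 2)⁻¹ • (1 : Matrix (Fin n) (Fin n) ℂ)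
        - Ttmat A γ γt z * (Ttmat A γ γt z)ᴴ).PosSemidef
      ∧ (∀ x : EuclideanSpace ℂ (Fin N),
          ‖Matrix.toEuclideanLin (Tmat A γ γt z) x‖ ≤ (z.im)⁻¹ * ‖x‖)
      ∧ (∀ x : EuclideanSpace ℂ (Fin n),
          ‖Matrix.toEuclideanLin (Ttmat A γ γt z) x‖ ≤ (z.im)⁻¹ * ‖x‖) := by
  intro z hz
  have e1 : Tmat A γ γt z = Tgen A γ γt z := rfl
  have e2 : Ttmat A γ γt z = Tgen Aᵀ γt γ z := by
    rw [Ttmat, Tgen, Matrix.transpose_map, Matrix.transpose_transpose]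
  obtain ⟨hp1, hb1⟩ := main_half A γ γt hγ hγt z hz
  obtain ⟨hp2, hb2⟩ := main_half Aᵀ γt γ hγt hγ z hz
  refine ⟨by rw [e1]; exact hp1, by rw [e2]; exact hp2, ?_, ?_⟩
  · intro x
    rw [e1]
    calc ‖Matrix.toEuclideanLin (Tgen A γ γt z) x‖
        = ‖evec (Tgen A γ γt z *ᵥ (WithLp.equiv 2 (Fin N → ℂ)) x)‖ := rfl
      _ ≤ (z.im)⁻¹ * ‖evec ((WithLp.equiv 2 (Fin N → ℂ)) x)‖ := hb1 _
      _ = (z.im)⁻¹ * ‖x‖ := by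
          rw [show evec ((WithLp.equiv 2 (Fin N → ℂ)) x) = x from
            (WithLp.equiv 2 (Fin N → ℂ)).symm_apply_apply x]
  · intro x
    rw [e2]
    calc ‖Matrix.toEuclideanLin (Tgen Aᵀ γt γ z) x‖
        = ‖evec (Tgen Aᵀ γt γ z *ᵥ (WithLp.equiv 2 (Fin n → ℂ)) x)‖ := rfl
      _ ≤ (z.im)⁻¹ * ‖evec ((WithLp.equiv 2 (Fin n → ℂ)) x)‖ := hb2 _
      _ = (z.im)⁻¹ * ‖x‖ := by
          rw [show evec ((WithLp.equiv 2 (Fin n → ℂ)) x) = x from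
            (WithLp.equiv 2 (Fin n → ℂ)).symm_apply_apply x]
end
end
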